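/- arXiv:0709.1353 — 4 statements merged into one kernel-verified Lean document; each statement's English description precedes it below -/
import Mathlib

section
/- Let $T \in L(\mathbb{V})$ with $m_T(x) = p(x)^d$, $p(x)$ monic irreducible of degree $m$. Then for each $1 \leq i \leq d$, the operator induced by $T$ on $\mathbb{V}_i/\mathbb{V}_{i-1}$ (where $\mathbb{V}_i = \ker p(T)^i$) has minimal polynomial $p(x)$; consequently $m$ divides $\dim_{\mathbb{F}} \mathbb{V}_i/\mathbb{V}_{i-1}$ for each $i$, and $m$ divides $\dim_{\mathbb{F}} \mathbb{V}$. -/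
open Polynomial

private theorem aux_coe_aeval_restrict {F V : Type*} [Field F] [AddCommGroup V] [Module F V]
    (T : Module.End F V) {U : Submodule F V} (hU : ∀ x ∈ U, T x ∈ U) (q : Polynomial F) (x : U) :
    ((Polynomial.aeval (T.restrict hU) q) x : V) = (Polynomial.aeval T q) x := by
  induction q using Polynomial.induction_on' with
  | add f g hf hg => simp [hf, hg]
  | monomial n a =>
    simp only [Polynomial.aeval_monomial, Module.End.mul_apply,
      Module.algebraMap_end_apply, Module.End.pow_restrict _ hU, LinearMap.restrict_apply,
      SetLike.val_smul]

set_option maxHeartbeats 1000000 in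
private theorem aux_natDegree_dvd {F W : Type*} [Field F] [AddCommGroup W] [Module F W]
    [FiniteDimensional F W] (S : Module.End F W) (p : Polynomial F) (hirr : Irreducible p)
    (h : Polynomial.aeval S p = 0) : p.natDegree ∣ Module.finrank F W := by
  haveI := Fact.mk hirr
  have hspan : ∀ a ∈ Ideal.span {p}, (Polynomial.aeval S).toRingHom a = 0 := by
    intro a ha
    rw [Ideal.mem_span_singleton] at ha
    obtain ⟨c, rfl⟩ := ha
    show Polynomial.aeval S (p * c) = 0
    rw [map_mul, h, zero_mul]
  set φ : AdjoinRoot p →+* Module.End F W :=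
    Ideal.Quotient.lift (Ideal.span {p}) (Polynomial.aeval S).toRingHom hspan with hφ
  have hφmk : ∀ q : Polynomial F, φ (AdjoinRoot.mk p q) = Polynomial.aeval S q := by
    intro q
    exact Ideal.Quotient.lift_mk _ _ _
  letI : Module (AdjoinRoot p) W := Module.compHom W φ
  haveI : IsScalarTower F (AdjoinRoot p) W := by
    constructor
    intro a k w
    obtain ⟨q, rfl⟩ := AdjoinRoot.mk_surjective k
    show φ (a • AdjoinRoot.mk p q) w = a • (φ (AdjoinRoot.mk p q) w)
    rw [AdjoinRoot.smul_mk, hφmk, hφmk, map_smul, LinearMap.smul_apply]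
  have hK : Module.finrank F (AdjoinRoot p) = p.natDegree := by
    rw [(AdjoinRoot.powerBasis hirr.ne_zero).finrank, AdjoinRoot.powerBasis_dim]
  exact ⟨Module.finrank (AdjoinRoot p) W, by rw [← hK, Module.finrank_mul_finrank]⟩

/-- Let `m_T = p^d` with `p` monic irreducible of degree `m`, and
`Vᵢ = ker p(T)ⁱ`. For `1 ≤ i ≤ d` the operator induced by `T` on `Vᵢ/Vᵢ₋₁` has
minimal polynomial `p` (expressed here as: a polynomial `q` annihilates the
induced operator iff `p ∣ q`); consequently `m` divides `dim Vᵢ/Vᵢ₋₁` and `m`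
divides `dim V`. -/
theorem induced_minpoly_and_dim_divisibility
    {F V : Type*} [Field F] [AddCommGroup V] [Module F V] [FiniteDimensional F V]
    (T : Module.End F V) (p : Polynomial F) (d m : ℕ)
    (hmonic : p.Monic) (hirr : Irreducible p) (hd : 1 ≤ d)
    (hm : p.natDegree = m) (hmin : minpoly F T = p ^ d) :
    (∀ i : ℕ, 1 ≤ i → i ≤ d →
      (∀ q : Polynomial F,
        (∀ x ∈ LinearMap.ker ((Polynomial.aeval T p) ^ i),
          (Polynomial.aeval T q) x ∈ LinearMap.ker ((Polynomial.aeval T p) ^ (i - 1)))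
        ↔ p ∣ q) ∧
      m ∣ (Module.finrank F (LinearMap.ker ((Polynomial.aeval T p) ^ i)) -
            Module.finrank F (LinearMap.ker ((Polynomial.aeval T p) ^ (i - 1))))) ∧
    m ∣ Module.finrank F V := by
  subst hm
  set P : Module.End F V := Polynomial.aeval T p with hP
  have hp0 : p ≠ 0 := hirr.ne_zero
  have hpow : ∀ k : ℕ, P ^ k = Polynomial.aeval T (p ^ k) := fun k => (map_pow _ _ _).symm
  have hPd : P ^ d = 0 := by
    rw [hpow, ← hmin]; exact minpoly.aeval F T
  -- kernels are monotone
  have hker_le : ∀ i : ℕ, LinearMap.ker (P ^ i) ≤ LinearMap.ker (P ^ (i + 1)) := by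
    intro i x hx
    rw [LinearMap.mem_ker] at hx ⊢
    rw [pow_succ', Module.End.mul_apply, hx, map_zero]
  -- strictness of the filtration up to d
  have hstrict : ∀ i : ℕ, 1 ≤ i → i ≤ d →
      LinearMap.ker (P ^ (i - 1)) ≠ LinearMap.ker (P ^ i) := by
    intro i h1 h2 heq
    have hi : i - 1 + 1 = i := Nat.succ_pred_eq_of_pos h1
    have heq' : LinearMap.ker (P ^ (i - 1)) = LinearMap.ker (P ^ (i - 1 + 1)) := by
      rw [hi]; exact heq
    have h3 := Module.End.ker_pow_constant heq' (d - (i - 1))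
    rw [Nat.add_sub_cancel' (by omega : i - 1 ≤ d)] at h3
    rw [hPd] at h3
    have h4 : P ^ (i - 1) = 0 := LinearMap.ker_eq_top.mp (by rw [h3, LinearMap.ker_zero])
    have h5 : Polynomial.aeval T (p ^ (i - 1)) = 0 := by rw [← hpow]; exact h4
    have h6 : minpoly F T ∣ p ^ (i - 1) := minpoly.dvd F T h5
    rw [hmin] at h6
    have h7 : d ≤ i - 1 := (pow_dvd_pow_iff hp0 hirr.not_isUnit).mp h6
    omega
  have hcomm : ∀ r s : Polynomial F,
      Polynomial.aeval T r * Polynomial.aeval T s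
        = Polynomial.aeval T s * Polynomial.aeval T r := by
    intro r s; rw [← map_mul, ← map_mul, mul_comm]
  have hTk : ∀ k : ℕ, (P ^ k) * T = T * (P ^ k) := by
    intro k
    rw [hpow]
    calc Polynomial.aeval T (p ^ k) * T
        = Polynomial.aeval T (p ^ k) * Polynomial.aeval T X := by rw [Polynomial.aeval_X]
      _ = Polynomial.aeval T X * Polynomial.aeval T (p ^ k) := hcomm _ _
      _ = T * Polynomial.aeval T (p ^ k) := by rw [Polynomial.aeval_X]
  have main : ∀ i : ℕ, 1 ≤ i → i ≤ d →
      (∀ q : Polynomial F,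
        (∀ x ∈ LinearMap.ker (P ^ i),
          (Polynomial.aeval T q) x ∈ LinearMap.ker (P ^ (i - 1)))
        ↔ p ∣ q) ∧
      p.natDegree ∣ (Module.finrank F (LinearMap.ker (P ^ i)) -
            Module.finrank F (LinearMap.ker (P ^ (i - 1)))) := by
    intro i h1 h2
    have hi : i - 1 + 1 = i := by omega
    constructor
    · -- minimal polynomial of induced operator
      intro q
      constructor
      · -- forward: by contradiction
        intro hforall
        by_contra hq
        have hc : IsCoprime p q := (hirr.coprime_iff_not_dvd).mpr hq
        have hc' : IsCoprime (p ^ i) q := hc.pow_left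
        obtain ⟨a, b, hab⟩ := hc'
        -- pick x ∈ ker P^i \ ker P^(i-1)
        have hle : LinearMap.ker (P ^ (i - 1)) ≤ LinearMap.ker (P ^ i) := by
          have := hker_le (i - 1)
          rwa [hi] at this
        obtain ⟨x, hxi, hxnot⟩ :=
          SetLike.exists_of_lt (lt_of_le_of_ne hle (hstrict i h1 h2))
        have hqx := hforall x hxi
        -- x = b(T) (q(T) x)
        have hone : Polynomial.aeval T a * P ^ i
            + Polynomial.aeval T b * Polynomial.aeval T q = 1 := by
          rw [hpow, ← map_mul, ← map_mul, ← map_add, hab, map_one]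
        have hx : Polynomial.aeval T b ((Polynomial.aeval T q) x) = x := by
          have := congrArg (fun f : Module.End F V => f x) hone
          simp only [LinearMap.add_apply, Module.End.mul_apply, Module.End.one_apply] at this
          rw [LinearMap.mem_ker.mp hxi, map_zero, zero_add] at this
          exact this
        apply hxnot
        rw [LinearMap.mem_ker, ← hx, ← Module.End.mul_apply, hpow,
          ← map_mul, mul_comm (p ^ (i - 1)) b, map_mul, Module.End.mul_apply, ← hpow,
          LinearMap.mem_ker.mp hqx, map_zero]
      · -- backward
        rintro ⟨r, rfl⟩ x hx
        rw [LinearMap.mem_ker, ← Module.End.mul_apply, hpow, ← map_mul]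
        have : p ^ (i - 1) * (p * r) = r * p ^ i := by
          rw [← mul_assoc, ← pow_succ, hi, mul_comm]
        rw [this, map_mul, Module.End.mul_apply, ← hpow, LinearMap.mem_ker.mp hx, map_zero]
    · -- dimension divisibility for the quotient
      set N : Submodule F V := LinearMap.ker (P ^ i) with hN
      set L : N →ₗ[F] V := (P ^ (i - 1)) ∘ₗ N.subtype with hL
      have hmemN : ∀ y : V, y ∈ N ↔ (P ^ i) y = 0 := by
        intro y
        rw [hN]
        exact LinearMap.mem_ker
      have hrange_inv : ∀ u ∈ LinearMap.range L, T u ∈ LinearMap.range L := by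
        rintro u ⟨x, rfl⟩
        have hx2 : (P ^ i) (x : V) = 0 := (hmemN _).mp x.2
        have hTx : T (x : V) ∈ N := by
          rw [hmemN, ← Module.End.mul_apply, hTk, Module.End.mul_apply, hx2, map_zero]
        refine ⟨⟨T x, hTx⟩, ?_⟩
        show (P ^ (i - 1)) (T x) = T ((P ^ (i - 1)) x)
        rw [← Module.End.mul_apply, hTk, Module.End.mul_apply]
      set U : Submodule F V := LinearMap.range L with hU
      have hUle : U ≤ LinearMap.ker P := by
        rintro u ⟨x, rfl⟩
        rw [LinearMap.mem_ker]
        show P ((P ^ (i - 1)) x) = 0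
        rw [← Module.End.mul_apply, ← pow_succ', hi]
        exact (hmemN _).mp x.2
      -- induced operator on U is annihilated by p
      have haeval : Polynomial.aeval (T.restrict hrange_inv) p = 0 := by
        apply LinearMap.ext
        intro u
        apply Subtype.ext
        rw [aux_coe_aeval_restrict]
        simp only [LinearMap.zero_apply, ZeroMemClass.coe_zero]
        rw [← hP]
        exact LinearMap.mem_ker.mp (hUle u.2)
      have hdvdU := aux_natDegree_dvd (T.restrict hrange_inv) p hirr haeval
      -- rank-nullity
      have hrn := LinearMap.finrank_range_add_finrank_ker L
      have hkerL : LinearMap.ker L = Submodule.comap N.subtype (LinearMap.ker (P ^ (i - 1))) :=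
        LinearMap.ker_comp _ _
      have hle : LinearMap.ker (P ^ (i - 1)) ≤ N := by
        rw [hN]
        have := hker_le (i - 1)
        rwa [hi] at this
      have hkdim : Module.finrank F (LinearMap.ker L)
          = Module.finrank F (LinearMap.ker (P ^ (i - 1))) := by
        rw [hkerL]
        exact (Submodule.comapSubtypeEquivOfLe hle).finrank_eq
      rw [hkdim, ← hU] at hrn
      have : Module.finrank F N - Module.finrank F (LinearMap.ker (P ^ (i - 1)))
          = Module.finrank F U := by omega
      rw [this]
      exact hdvdU
  refine ⟨main, ?_⟩
  -- m ∣ dim V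
  have key : ∀ i : ℕ, i ≤ d → p.natDegree ∣ Module.finrank F (LinearMap.ker (P ^ i)) := by
    intro i
    induction i with
    | zero =>
      intro _
      have h0 : LinearMap.ker (P ^ 0) = ⊥ := by
        rw [pow_zero]
        exact LinearMap.ker_id
      rw [h0, finrank_bot]
      exact dvd_zero _
    | succ j ih =>
      intro hj
      have hdvdj := ih (by omega)
      have hsub := (main (j + 1) (by omega) hj).2
      change p.natDegree ∣ Module.finrank F (LinearMap.ker (P ^ (j + 1))) - Module.finrank F (LinearMap.ker (P ^ j)) at hsub
      have hle : LinearMap.ker (P ^ j) ≤ LinearMap.ker (P ^ (j + 1)) := hker_le j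
      have hmono : Module.finrank F (LinearMap.ker (P ^ j))
          ≤ Module.finrank F (LinearMap.ker (P ^ (j + 1))) := Submodule.finrank_mono hle
      have : Module.finrank F (LinearMap.ker (P ^ (j + 1)))
          = (Module.finrank F (LinearMap.ker (P ^ (j + 1)))
              - Module.finrank F (LinearMap.ker (P ^ j)))
            + Module.finrank F (LinearMap.ker (P ^ j)) := by omega
      rw [this]
      exact Nat.dvd_add hsub hdvdj
  have := key d le_rfl
  rwa [hPd, LinearMap.ker_zero, finrank_top] at this
end

section
/- Let $T$ be a linear operator on a finite-dimensional vector space $\mathbb{V}$ over a field $\mathbb{F}$. An operator $S$ commuting with $T$ leaves every $T$-invariant subspace of $\mathbb{V}$ invariant if and only if $S$ is a polynomial in $T$ with coefficients in $\mathbb{F}$. -/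
open Polynomial
open scoped DirectSum

section Aux

universe u v

variable {F : Type u} {V : Type v} [Field F] [AddCommGroup V] [Module F V]

/-- Conjugation by a linear equivalence, as an algebra equivalence of endomorphism algebras. -/
noncomputable def conjAlg {W : Type*} [AddCommGroup W] [Module F W] (e : V ≃ₗ[F] W) :
    Module.End F V ≃ₐ[F] Module.End F W :=
  AlgEquiv.ofLinearEquiv e.conj
    (by rw [Module.End.one_eq_id, e.conj_id, Module.End.one_eq_id])
    (fun f g => by
      rw [Module.End.mul_eq_comp, e.conj_comp g f, Module.End.mul_eq_comp])

variable (T : Module.End F V)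

/-- If `v` lies in a `T`-invariant subspace, so does `f(T) v`. -/
lemma aeval_mem_of_invariant {W : Submodule F V} (hW : ∀ v ∈ W, T v ∈ W)
    (f : F[X]) {v : V} (hv : v ∈ W) : aeval T f v ∈ W := by
  induction f using Polynomial.induction_on' with
  | add p q hp hq => simpa [map_add] using W.add_mem hp hq
  | monomial n c =>
      have hpow : ∀ n : ℕ, (T ^ n) v ∈ W := by
        intro n
        induction n with
        | zero => simpa using hv
        | succ k ih =>
            have : (T ^ (k + 1)) v = T ((T ^ k) v) := by
              rw [pow_succ']; rfl
            rw [this]; exact hW _ ih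
      simpa [aeval_monomial, Module.algebraMap_end_apply] using W.smul_mem c (hpow n)

/-- The cyclic subspace `F[T] x`. -/
def cyc (x : V) : Submodule F V where
  carrier := {v | ∃ f : F[X], aeval T f x = v}
  add_mem' := by
    rintro a b ⟨f, rfl⟩ ⟨g, rfl⟩
    exact ⟨f + g, by simp [map_add]⟩
  zero_mem' := ⟨0, by simp⟩
  smul_mem' := by
    rintro c v ⟨f, rfl⟩
    exact ⟨C c * f, by simp [Module.algebraMap_end_apply]⟩

lemma mem_cyc {x v : V} : v ∈ cyc T x ↔ ∃ f : F[X], aeval T f x = v := Iff.rfl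

lemma self_mem_cyc (x : V) : x ∈ cyc T x := ⟨1, by simp⟩

lemma cyc_invariant (x : V) : ∀ v ∈ cyc T x, T v ∈ cyc T x := by
  rintro v ⟨f, rfl⟩
  exact ⟨X * f, by simp [Module.End.mul_apply]⟩

/-- Conductor ideal of `y` into an invariant subspace `W`. -/
def condI (W : Submodule F V) (hW : ∀ v ∈ W, T v ∈ W) (y : V) : Ideal F[X] where
  carrier := {f | aeval T f y ∈ W}
  add_mem' := by
    intro f g hf hg
    simpa [map_add] using W.add_mem hf hg
  zero_mem' := by simp
  smul_mem' := by
    intro c f hf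
    have h : aeval T (c * f) y = aeval T c (aeval T f y) := by
      rw [map_mul, Module.End.mul_apply]
    simpa [smul_eq_mul, h] using aeval_mem_of_invariant T hW c hf

lemma mem_condI {W : Submodule F V} {hW} {y : V} {f : F[X]} :
    f ∈ condI T W hW y ↔ aeval T f y ∈ W := Iff.rfl

/-- There is a vector whose annihilator (w.r.t. `T`) is the kernel of `aeval T`. -/
lemma exists_topgen_aux {V : Type (max u v)} [AddCommGroup V] [Module F V]
    [Module.Finite F V] (T : Module.End F V) :
    ∃ x : V, ∀ f : F[X], aeval T f x = 0 → aeval T f = 0 := by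
  classical
  have htor : Module.IsTorsion F[X] (Module.AEval' T) := by
    intro z
    refine ⟨⟨minpoly F T,
      mem_nonZeroDivisors_of_ne_zero (minpoly.ne_zero (LinearMap.isIntegral T))⟩, ?_⟩
    show (minpoly F T : F[X]) • z = 0
    have h := Module.AEval.of_aeval_smul (M := V) T (minpoly F T) ((Module.AEval'.of T).symm z)
    rw [LinearEquiv.apply_symm_apply] at h
    rw [← h, minpoly.aeval]
    simp
  obtain ⟨ι, hι, p, hp, e, ⟨equiv⟩⟩ :=
    Module.equiv_directSum_of_isTorsion (R := F[X]) (M := Module.AEval' T) htor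
  let x₀ : ⨁ i : ι, F[X] ⧸ (F[X] ∙ p i ^ e i) :=
    DFinsupp.equivFunOnFintype.symm (fun i => Submodule.Quotient.mk 1)
  refine ⟨(Module.AEval'.of T).symm (equiv.symm x₀), fun f hf => ?_⟩
  have hdvd : ∀ i : ι, p i ^ e i ∣ f := by
    intro i
    have h1 : f • equiv.symm x₀ = 0 := by
      apply (Module.AEval'.of T).symm.injective
      rw [Module.AEval.of_symm_smul]
      simpa using hf
    have h2 : f • x₀ = 0 := by
      have h := congrArg equiv h1
      rw [map_smul, LinearEquiv.apply_symm_apply, map_zero] at h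
      exact h
    have h3 : (f • x₀) i = 0 := by rw [h2]; rfl
    have h4 : f • (Submodule.Quotient.mk 1 : F[X] ⧸ (F[X] ∙ p i ^ e i)) = 0 := by
      rw [← h3, DFinsupp.smul_apply]
      rfl
    rw [show f • (Submodule.Quotient.mk 1 : F[X] ⧸ (F[X] ∙ p i ^ e i))
        = Submodule.Quotient.mk (f • (1 : F[X])) from rfl,
      Submodule.Quotient.mk_eq_zero, Submodule.mem_span_singleton] at h4
    obtain ⟨a, ha⟩ := h4
    rw [smul_eq_mul, smul_eq_mul, mul_one] at ha
    exact ⟨a, by rw [← ha]; ring⟩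
  ext v
  show aeval T f v = 0
  have hz : f • (Module.AEval'.of T v) = 0 := by
    have hall : ∀ z : ⨁ i : ι, F[X] ⧸ (F[X] ∙ p i ^ e i), f • z = 0 := by
      intro z
      refine DFinsupp.ext fun i => ?_
      have h : f • z i = 0 := by
        obtain ⟨c, hc⟩ := (F[X] ∙ p i ^ e i).mkQ_surjective (z i)
        rw [← hc]
        show f • Submodule.Quotient.mk c = 0
        rw [show f • (Submodule.Quotient.mk c : F[X] ⧸ (F[X] ∙ p i ^ e i))
            = Submodule.Quotient.mk (f • c) from rfl,
          Submodule.Quotient.mk_eq_zero, Submodule.mem_span_singleton]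
        obtain ⟨a, ha⟩ := hdvd i
        exact ⟨c * a, by rw [smul_eq_mul, smul_eq_mul, ha]; ring⟩
      rw [DFinsupp.smul_apply]
      rw [h]
      rfl
    have h := congrArg equiv.symm (hall (equiv (Module.AEval'.of T v)))
    rw [map_smul, LinearEquiv.symm_apply_apply, map_zero] at h
    exact h
  have h := congrArg (Module.AEval'.of T).symm hz
  rw [Module.AEval.of_symm_smul] at h
  simpa using h

lemma exists_topgen [FiniteDimensional F V] :
    ∃ x : V, ∀ f : F[X], aeval T f x = 0 → aeval T f = 0 := by
  let e : V ≃ₗ[F] ULift.{u} V := ULift.moduleEquiv.symm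
  let T' : Module.End F (ULift.{u} V) := conjAlg e T
  obtain ⟨x, hx⟩ := exists_topgen_aux (F := F) T'
  refine ⟨e.symm x, fun f hf => ?_⟩
  have key : aeval T' f = conjAlg e (aeval T f) :=
    aeval_algHom_apply (conjAlg e) T f
  have h0 : aeval T' f x = 0 := by
    rw [key]
    show e (aeval T f (e.symm x)) = 0
    rw [hf, map_zero]
  have h1 := hx f h0
  rw [key] at h1
  have h2 : conjAlg e (aeval T f) = conjAlg e 0 := by simpa using h1
  exact (conjAlg e).injective h2

end Aux

section Main

variable {F V : Type*} [Field F] [AddCommGroup V] [Module F V] [FiniteDimensional F V]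
variable (T : Module.End F V)

lemma sup_invariant {A B : Submodule F V} (hA : ∀ v ∈ A, T v ∈ A) (hB : ∀ v ∈ B, T v ∈ B) :
    ∀ v ∈ A ⊔ B, T v ∈ A ⊔ B := by
  intro v hv
  obtain ⟨a, ha, b, hb, rfl⟩ := Submodule.mem_sup.mp hv
  rw [map_add]
  exact Submodule.add_mem_sup (hA a ha) (hB b hb)

/-- The cyclic subspace of a vector of maximal order has an invariant complement. -/
lemma exists_invariant_compl (x : V) (hx : ∀ f : F[X], aeval T f x = 0 → aeval T f = 0) :
    ∃ N : Submodule F V, (∀ v ∈ N, T v ∈ N) ∧ (N ⊓ cyc T x = ⊥) ∧ (N ⊔ cyc T x = ⊤) := by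
  classical
  set m : F[X] := minpoly F T with hm
  have hm0 : m ≠ 0 := minpoly.ne_zero (LinearMap.isIntegral T)
  obtain ⟨N, ⟨hNinv, hNinf⟩, hNmax⟩ :=
    (set_has_maximal_iff_noetherian.mpr inferInstance)
      {N : Submodule F V | (∀ v ∈ N, T v ∈ N) ∧ N ⊓ cyc T x = ⊥}
      ⟨⊥, by simp, by simp⟩
  refine ⟨N, hNinv, hNinf, ?_⟩
  by_contra htop
  have hU'inv : ∀ v ∈ N ⊔ cyc T x, T v ∈ N ⊔ cyc T x :=
    sup_invariant T hNinv (cyc_invariant T x)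
  obtain ⟨y, hy⟩ : ∃ y : V, y ∉ N ⊔ cyc T x := by
    by_contra h
    push_neg at h
    exact htop (Submodule.eq_top_iff'.mpr h)
  set I : Ideal F[X] := condI T (N ⊔ cyc T x) hU'inv y with hI
  set f : F[X] := Submodule.IsPrincipal.generator I with hf
  have hmemI : ∀ c : F[X], c ∈ I ↔ f ∣ c := by
    intro c
    conv_lhs => rw [← Ideal.span_singleton_generator I]
    rw [Ideal.mem_span_singleton, ← hf]
  have hmI : m ∈ I := by
    rw [mem_condI, hm, minpoly.aeval]
    simp
  obtain ⟨u, hu⟩ : f ∣ m := (hmemI m).mp hmI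
  have hfy : aeval T f y ∈ N ⊔ cyc T x := Submodule.IsPrincipal.generator_mem I
  obtain ⟨n, hn, c, hc, hnc⟩ := Submodule.mem_sup.mp hfy
  obtain ⟨g, rfl⟩ := (mem_cyc T).mp hc
  -- 0 = m(T) y = u(T) n + (u*g)(T) x, so (u*g)(T)x ∈ N ⊓ cyc x = ⊥
  have hug : aeval T (u * g) x = - aeval T u n := by
    have h0 : aeval T m y = 0 := by rw [hm, minpoly.aeval]; rfl
    have h1 : aeval T u (aeval T f y) = 0 := by
      rw [← Module.End.mul_apply, ← map_mul, mul_comm, ← hu, h0]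
    rw [← hnc, map_add, ← Module.End.mul_apply (aeval T u) (aeval T g), ← map_mul] at h1
    exact eq_neg_of_add_eq_zero_right h1
  have hugx : aeval T (u * g) x = 0 := by
    have h1 : aeval T (u * g) x ∈ N := by
      rw [hug]
      exact N.neg_mem (aeval_mem_of_invariant T hNinv u hn)
    have h2 : aeval T (u * g) x ∈ cyc T x := ⟨u * g, rfl⟩
    have h3 : aeval T (u * g) x ∈ N ⊓ cyc T x := ⟨h1, h2⟩
    rw [hNinf] at h3
    simpa using h3
  have hmug : m ∣ u * g := minpoly.dvd F T (hx _ hugx)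
  have hu0 : u ≠ 0 := by
    rintro rfl
    rw [mul_zero] at hu
    exact hm0 hu
  obtain ⟨w, hw⟩ : f ∣ g := by
    obtain ⟨d, hd⟩ := hmug
    refine ⟨d, ?_⟩
    apply mul_left_cancel₀ hu0
    rw [hd, hu]
    ring
  -- replace y by y' := y - w(T) x, which has the same conductor and f(T) y' = n ∈ N
  set y' : V := y - aeval T w x with hy'
  have hfy' : aeval T f y' = n := by
    rw [hy', map_sub, ← hnc]
    have h : aeval T f (aeval T w x) = aeval T g x := by
      rw [← Module.End.mul_apply, ← map_mul, ← hw]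
    rw [h]
    abel
  have hcond' : ∀ c : F[X], aeval T c y' ∈ N ⊔ cyc T x ↔ f ∣ c := by
    intro c
    rw [hy', map_sub]
    have h1 : aeval T c (aeval T w x) ∈ N ⊔ cyc T x :=
      Submodule.mem_sup_right ⟨c * w, by rw [map_mul, Module.End.mul_apply]⟩
    rw [Submodule.sub_mem_iff_left _ h1]
    exact (hmemI c).symm.symm.trans (Iff.rfl) |>.symm.symm
  have hy'N : y' ∉ N := by
    intro hmem
    apply hy
    have : y = y' + aeval T w x := by rw [hy']; abel
    rw [this]
    exact Submodule.add_mem _ (Submodule.mem_sup_left hmem)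
      (Submodule.mem_sup_right ⟨w, rfl⟩)
  have hN'inv : ∀ v ∈ N ⊔ cyc T y', T v ∈ N ⊔ cyc T y' :=
    sup_invariant T hNinv (cyc_invariant T y')
  have hN'inf : (N ⊔ cyc T y') ⊓ cyc T x = ⊥ := by
    rw [eq_bot_iff]
    rintro v ⟨hv1, hv2⟩
    obtain ⟨n₂, hn₂, c', hc', hsum⟩ := Submodule.mem_sup.mp hv1
    obtain ⟨c, rfl⟩ := (mem_cyc T).mp hc'
    have hcy : aeval T c y' ∈ N ⊔ cyc T x := by
      have : aeval T c y' = v - n₂ := by rw [← hsum]; abel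
      rw [this]
      exact Submodule.sub_mem _ (Submodule.mem_sup_right hv2) (Submodule.mem_sup_left hn₂)
    obtain ⟨d, hd⟩ := (hcond' c).mp hcy
    have hcN : aeval T c y' ∈ N := by
      rw [hd, mul_comm, map_mul, Module.End.mul_apply, hfy']
      exact aeval_mem_of_invariant T hNinv d hn
    have hvN : v ∈ N := by
      rw [← hsum]
      exact Submodule.add_mem _ hn₂ hcN
    have : v ∈ N ⊓ cyc T x := ⟨hvN, hv2⟩
    rw [hNinf] at this
    exact this
  have hlt : N < N ⊔ cyc T y' := by
    refine lt_of_le_of_ne le_sup_left (fun h => hy'N ?_)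
    rw [h]
    exact Submodule.mem_sup_right (self_mem_cyc T y')
  exact hNmax (N ⊔ cyc T y') ⟨hN'inv, hN'inf⟩ hlt

end Main

/-- An operator `S` commuting with `T` leaves every `T`-invariant subspace
invariant iff `S` is a polynomial in `T`. -/
theorem strongly_commutes_iff_polynomial
    {F V : Type*} [Field F] [AddCommGroup V] [Module F V] [FiniteDimensional F V]
    (T S : Module.End F V) (hST : S * T = T * S) :
    (∀ W : Submodule F V, (∀ x ∈ W, T x ∈ W) → ∀ x ∈ W, S x ∈ W) ↔
      ∃ q : Polynomial F, S = Polynomial.aeval T q := by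
  constructor
  · intro hyp
    obtain ⟨x, hx⟩ := exists_topgen T
    obtain ⟨N, hNinv, hNinf, hNsup⟩ := exists_invariant_compl T x hx
    have hcomm : ∀ f : F[X], Commute S (aeval T f) := by
      intro f
      induction f using Polynomial.induction_on' with
      | add p q hp hq => rw [map_add]; exact hp.add_right hq
      | monomial n c =>
          rw [aeval_monomial]
          have hC : Commute S T := hST
          exact (Algebra.commute_algebraMap_right c S).mul_right (hC.pow_right n)
    obtain ⟨q, hq⟩ := (mem_cyc T).mp
      (hyp (cyc T x) (cyc_invariant T x) x (self_mem_cyc T x))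
    -- hq : aeval T q x = S x
    have hSN : ∀ y ∈ N, S y = aeval T q y := by
      intro y hy
      obtain ⟨r, hr⟩ := (mem_cyc T).mp
        (hyp (cyc T (x + y)) (cyc_invariant T (x + y)) (x + y) (self_mem_cyc T (x + y)))
      -- hr : aeval T r (x + y) = S (x + y)
      have hSy : S y ∈ N := hyp N hNinv y hy
      have hkey : aeval T (q - r) x = aeval T r y - S y := by
        have h1 : aeval T r x + aeval T r y = S x + S y := by
          have h := hr
          rw [map_add, map_add] at h
          exact h
        rw [← hq] at h1
        rw [map_sub, LinearMap.sub_apply, sub_eq_sub_iff_add_eq_add, ← h1]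
        abel
      have hz : aeval T (q - r) x = 0 := by
        have h1 : aeval T (q - r) x ∈ cyc T x := ⟨q - r, rfl⟩
        have h2 : aeval T (q - r) x ∈ N := by
          rw [hkey]
          exact N.sub_mem (aeval_mem_of_invariant T hNinv r hy) hSy
        have h3 : aeval T (q - r) x ∈ N ⊓ cyc T x := ⟨h2, h1⟩
        rw [hNinf] at h3
        simpa using h3
      have hqr : aeval T q = aeval T r := by
        have := hx _ hz
        rw [map_sub] at this
        exact sub_eq_zero.mp this
      have h4 : aeval T r y - S y = 0 := by rw [← hkey, hz]
      rw [sub_eq_zero] at h4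
      rw [← h4, hqr]
    refine ⟨q, LinearMap.ext fun v => ?_⟩
    have hv : v ∈ N ⊔ cyc T x := by rw [hNsup]; exact Submodule.mem_top
    obtain ⟨nv, hnv, c', hc', rfl⟩ := Submodule.mem_sup.mp hv
    obtain ⟨c, rfl⟩ := (mem_cyc T).mp hc'
    have h1 : S (aeval T c x) = aeval T q (aeval T c x) := by
      have h2 : S (aeval T c x) = aeval T c (S x) := by
        rw [← Module.End.mul_apply, (hcomm c).eq, Module.End.mul_apply]
      rw [h2, ← hq, ← Module.End.mul_apply, ← map_mul, mul_comm, map_mul, Module.End.mul_apply]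
    rw [map_add, map_add, hSN nv hnv, h1]
  · rintro ⟨q, rfl⟩ W hW v hv
    exact aeval_mem_of_invariant T hW q hv
end

section
/- Let $T \in L(\mathbb{V})$ with minimal polynomial $m_T(x) = p(x)^d$ where $p(x)$ is monic irreducible over $\mathbb{F}$ and $p'(x) \not\equiv 0$. Then there exists an operator $S$ in the subalgebra $\mathbb{F}[T]$ whose minimal polynomial is exactly $p(x)$. -/
open Polynomial

/-- If `m_T = p^d` with `p` monic irreducible and `p' ≢ 0`, then there is an
operator `S` in `F[T]` (a polynomial in `T`) with minimal polynomial exactly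
`p`. -/
theorem exists_semisimple_in_FT
    {F V : Type*} [Field F] [AddCommGroup V] [Module F V] [FiniteDimensional F V]
    (T : Module.End F V) (p : Polynomial F) (d : ℕ)
    (hmonic : p.Monic) (hirr : Irreducible p) (hd : 1 ≤ d)
    (hmin : minpoly F T = p ^ d) (hder : Polynomial.derivative p ≠ 0) :
    ∃ q : Polynomial F, minpoly F (Polynomial.aeval T q) = p := by
  have sep : p.Separable := (Polynomial.separable_iff_derivative_ne_zero hirr).mpr hder
  have nil : minpoly F T ∣ p ^ d := hmin ▸ dvd_rfl
  -- The space is nontrivial (else the minimal polynomial of `T` would divide `1`).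
  have hnontriv : Nontrivial (Module.End F V) := by
    by_contra h
    rw [not_nontrivial_iff_subsingleton] at h
    have h0 : aeval T (1 : Polynomial F) = 0 := Subsingleton.elim _ _
    have h1 := minpoly.dvd F T h0
    rw [hmin] at h1
    exact hirr.not_isUnit ((isUnit_pow_iff (by omega)).mp (isUnit_of_dvd_one h1))
  -- Follow Mathlib's Jordan–Chevalley proof, working in the commutative algebra `F[T]`.
  set ff : Algebra.adjoin F {T} := ⟨T, Algebra.self_mem_adjoin_singleton F T⟩ with hff
  have nil' : IsNilpotent (aeval ff p) := by
    refine ⟨d, ?_⟩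
    obtain ⟨q, hq⟩ := nil
    rw [← map_pow, Subtype.ext_iff]
    simp [ff, hq]
  have sep' : IsUnit (aeval ff (derivative p)) := by
    obtain ⟨a, b, h⟩ : IsCoprime (p ^ d) (derivative p) := sep.pow_left
    replace h : (aeval T b) * (aeval T (derivative p)) = 1 := by
      simpa only [map_add, map_mul, map_one, minpoly.dvd_iff.mp nil, mul_zero, zero_add]
        using (aeval T).congr_arg h
    refine .of_mul_eq_one_right (aeval ff b) (Subtype.ext_iff.mpr ?_)
    simpa [ff, coe_aeval_mk_apply] using h
  obtain ⟨⟨s, mem⟩, ⟨-, hss⟩, -⟩ :=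
    Polynomial.existsUnique_nilpotent_sub_and_aeval_eq_zero nil' sep'
  replace hss : aeval s p = 0 := by
    rwa [Subtype.ext_iff, coe_aeval_mk_apply] at hss
  rw [Algebra.adjoin_singleton_eq_range_aeval] at mem
  obtain ⟨q, hq⟩ := mem
  refine ⟨q, ?_⟩
  rw [show aeval T q = s from hq]
  -- Now show the minimal polynomial of `s` is exactly `p`.
  obtain ⟨c, hc⟩ := minpoly.dvd F s hss
  have hmono : (minpoly F s).Monic := minpoly.monic (IsIntegral.of_finite F s)
  rcases hirr.isUnit_or_isUnit hc with h | h
  · exfalso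
    have h1 : minpoly F s = 1 := hmono.eq_one_of_isUnit h
    have := minpoly.aeval F s
    rw [h1, map_one] at this
    exact one_ne_zero this
  · exact Polynomial.eq_of_monic_of_associated hmono hmonic ⟨h.unit, hc.symm⟩
end

section
/- Let $T$ be a linear operator on a finite-dimensional vector space $\mathbb{V}$ over a field $\mathbb{F}$ with more than two elements. Then every element of the centralizer algebra $Z_L(T)$ is a sum of at most two invertible elements of $Z_L(T)$. -/
open Polynomial

private lemma isCoprime_of_isUnit_right {R : Type*} [CommSemiring R] {a m : R}
    (hu : IsUnit m) : IsCoprime a m :=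
  ⟨0, ↑hu.unit⁻¹, by simp⟩

/-- Key polynomial lemma: over a field with more than two elements, for any nonzero
polynomial `m` there is `g` with both `g` and `X - g` coprime to `m`. -/
private lemma exists_coprime_split {F : Type*} [Field F] (c : F) (hc0 : c ≠ 0) (hc1 : c ≠ 1) :
    ∀ (m : F[X]), m ≠ 0 → ∃ g : F[X], IsCoprime g m ∧ IsCoprime (X - g) m := by
  suffices H : ∀ n (m : F[X]), m ≠ 0 → m.natDegree = n →
      ∃ g : F[X], IsCoprime g m ∧ IsCoprime (X - g) m from
    fun m hm => H m.natDegree m hm rfl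
  intro n
  induction n using Nat.strong_induction_on with
  | _ n IH =>
    intro m hm hdeg
    by_cases hu : IsUnit m
    · exact ⟨1, isCoprime_of_isUnit_right hu, isCoprime_of_isUnit_right hu⟩
    obtain ⟨p, hp, hpd⟩ := WfDvdMonoid.exists_irreducible_factor hu hm
    obtain ⟨m', rfl⟩ := hpd
    have hm' : m' ≠ 0 := right_ne_zero_of_mul hm
    have hp0 : p ≠ 0 := hp.ne_zero
    have hppos : 0 < p.natDegree := hp.natDegree_pos
    have hdeg' : m'.natDegree < n := by
      subst hdeg
      rw [Polynomial.natDegree_mul hp0 hm']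
      omega
    obtain ⟨g', hg1, hg2⟩ := IH _ hdeg' m' hm' rfl
    have hprime : Prime p := hp.prime
    by_cases hpm : p ∣ m'
    · refine ⟨g', ?_, ?_⟩
      · have hnd : ¬ p ∣ g' := fun hd =>
          hp.not_isUnit (hg1.isUnit_of_dvd' hd hpm)
        exact ((hp.coprime_iff_not_dvd.mpr hnd).symm).mul_right hg1
      · have hnd : ¬ p ∣ (X - g') := fun hd =>
          hp.not_isUnit (hg2.isUnit_of_dvd' hd hpm)
        exact ((hp.coprime_iff_not_dvd.mpr hnd).symm).mul_right hg2
    · -- find t ∈ {0, 1, C c} avoiding both residues mod p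
      have hgood : ∀ a : F, a ≠ 0 → ¬ p ∣ m' * C a := by
        intro a ha hd
        rcases hprime.dvd_or_dvd hd with h | h
        · exact hpm h
        · exact hp.not_isUnit (isUnit_of_dvd_unit h (isUnit_C.mpr (isUnit_iff_ne_zero.mpr ha)))
      have contraA : ∀ (a : F) (t₁ t₂ : F[X]), a ≠ 0 → t₂ - t₁ = C a →
          p ∣ (g' + m' * t₁) → p ∣ (g' + m' * t₂) → False := by
        intro a t₁ t₂ ha hsub h1 h2
        apply hgood a ha
        have : m' * C a = (g' + m' * t₂) - (g' + m' * t₁) := by rw [← hsub]; ring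
        rw [this]
        exact dvd_sub h2 h1
      have contraB : ∀ (a : F) (t₁ t₂ : F[X]), a ≠ 0 → t₂ - t₁ = C a →
          p ∣ (X - (g' + m' * t₁)) → p ∣ (X - (g' + m' * t₂)) → False := by
        intro a t₁ t₂ ha hsub h1 h2
        apply hgood a ha
        have : m' * C a = (X - (g' + m' * t₁)) - (X - (g' + m' * t₂)) := by rw [← hsub]; ring
        rw [this]
        exact dvd_sub h1 h2
      have key3 : ∃ t : F[X], ¬ p ∣ (g' + m' * t) ∧ ¬ p ∣ (X - (g' + m' * t)) := by
        by_contra hcon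
        push_neg at hcon
        have d0 := hcon 0
        have d1 := hcon 1
        have dc := hcon (C c)
        have e1 : (1 : F[X]) - 0 = C 1 := by simp
        have ec : (C c : F[X]) - 0 = C c := by simp
        have ec1 : (C c : F[X]) - 1 = C (c - 1) := by simp [map_sub]
        have hc1' : c - 1 ≠ 0 := sub_ne_zero.mpr hc1
        by_cases h0 : p ∣ (g' + m' * 0)
        · by_cases h1 : p ∣ (g' + m' * 1)
          · exact contraA 1 0 1 one_ne_zero e1 h0 h1
          · have h1' := (d1 h1)
            by_cases hc' : p ∣ (g' + m' * C c)
            · exact contraA c 0 (C c) hc0 ec h0 hc'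
            · exact contraB (c - 1) 1 (C c) hc1' ec1 h1' (dc hc')
        · have h0' := d0 h0
          by_cases h1 : p ∣ (g' + m' * 1)
          · by_cases hc' : p ∣ (g' + m' * C c)
            · exact contraA (c - 1) 1 (C c) hc1' ec1 h1 hc'
            · exact contraB c 0 (C c) hc0 ec h0' (dc hc')
          · exact contraB 1 0 1 one_ne_zero e1 h0' (d1 h1)
      obtain ⟨t, ht1, ht2⟩ := key3
      refine ⟨g' + m' * t, ?_, ?_⟩
      · exact ((hp.coprime_iff_not_dvd.mpr ht1).symm).mul_right (hg1.add_mul_left_left t)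
      · have h2' : IsCoprime (X - (g' + m' * t)) m' := by
          have := hg2.add_mul_left_left (-t)
          have heq : X - g' + m' * (-t) = X - (g' + m' * t) := by ring
          rwa [heq] at this
        exact ((hp.coprime_iff_not_dvd.mpr ht2).symm).mul_right h2'

/-- Over a field with more than two elements, every element of the centralizer
algebra `Z_L(T)` is a sum of at most two invertible elements of `Z_L(T)`. -/
theorem centralizer_sum_of_two_units
    {F V : Type*} [Field F] [AddCommGroup V] [Module F V] [FiniteDimensional F V]
    (hF : ∃ c : F, c ≠ 0 ∧ c ≠ 1)
    (T S : Module.End F V) (hS : S * T = T * S) :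
    ∃ U₁ U₂ : Module.End F V,
      U₁ * T = T * U₁ ∧ U₂ * T = T * U₂ ∧ IsUnit U₁ ∧ IsUnit U₂ ∧ S = U₁ + U₂ := by
  obtain ⟨c, hc0, hc1⟩ := hF
  have hint : IsIntegral F S := IsIntegral.of_finite F S
  have hm : minpoly F S ≠ 0 := minpoly.ne_zero hint
  obtain ⟨g, hg1, hg2⟩ := exists_coprime_split c hc0 hc1 (minpoly F S) hm
  have hcomm : ∀ q : F[X], (aeval S q) * T = T * (aeval S q) := by
    intro q
    have hTS : Commute T S := (Commute.symm hS)
    have := Algebra.commute_of_mem_adjoin_singleton_of_commute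
      (Polynomial.aeval_mem_adjoin_singleton F S (p := q)) hTS
    exact this.symm.eq
  have hunit : ∀ q : F[X], IsCoprime q (minpoly F S) → IsUnit (aeval S q) := by
    intro q ⟨a, b, hab⟩
    have hab' : q * a + b * (minpoly F S) = 1 := by rw [mul_comm q a]; exact hab
    have h1 : aeval S q * aeval S a = 1 := by
      have := congrArg (aeval S) hab'
      simpa [minpoly.aeval] using this
    have h2 : aeval S a * aeval S q = 1 := by
      rw [← map_mul, mul_comm a q, map_mul]; exact h1
    exact ⟨⟨aeval S q, aeval S a, h1, h2⟩, rfl⟩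
  refine ⟨aeval S g, aeval S (X - g), hcomm g, hcomm (X - g), hunit g hg1, hunit _ hg2, ?_⟩
  rw [← map_add]
  simp
end
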